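/- (Strict concavity of the two-stage utility in the first-stage selection fraction.) For x in the feasible set X = {x ∈ (0,1) : (α₁ − p_A x)/p_B ∈ (0,1)}, let t_A(x), t_B(x) be the unique reals with Φ^c(t_A(x)) = x and Φ^c(t_B(x)) = (α₁ − p_A x)/p_B, and set F(x) = Q₂(t_A(x), t_B(x)). Then for all x₁, x₂ ∈ X with x₁ ≠ x₂ and all λ ∈ (0,1): F(λ x₁ + (1 − λ) x₂) > λ F(x₁) + (1 − λ) F(x₂). -/

import Mathlib

open MeasureTheory Set

/-- Standard normal density. -/
noncomputable def phi (t : ℝ) : ℝ := Real.exp (-t ^ 2 / 2) / Real.sqrt (2 * Real.pi)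

/-- Standard normal CDF. -/
noncomputable def Phi (t : ℝ) : ℝ := ∫ u in Set.Iic t, phi u

/-- Standard normal complementary CDF. -/
noncomputable def Phic (t : ℝ) : ℝ := 1 - Phi t

lemma phi_pos (t : ℝ) : 0 < phi t := by
  apply div_pos (Real.exp_pos _)
  exact Real.sqrt_pos.2 (by positivity)

lemma phi_nonneg (t : ℝ) : 0 ≤ phi t := (phi_pos t).le

lemma continuous_phi : Continuous phi := by
  unfold phi
  fun_prop

lemma measurable_phi : Measurable phi := continuous_phi.measurable

lemma integrable_phi : Integrable phi := by
  have h : Integrable (fun x : ℝ => Real.exp (-(1/2) * x ^ 2)) := integrable_exp_neg_mul_sq (by norm_num)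
  have := h.div_const (Real.sqrt (2 * Real.pi))
  apply this.congr
  filter_upwards with x
  unfold phi
  ring_nf

lemma integral_phi : ∫ x, phi x = 1 := by
  unfold phi
  rw [integral_div]
  have h1 : ∫ x : ℝ, Real.exp (-x ^ 2 / 2) = ∫ x : ℝ, Real.exp (-(1/2) * x ^ 2) := by
    congr 1; ext x; ring_nf
  rw [h1, integral_gaussian]
  rw [div_eq_one_iff_eq (by positivity)]
  rw [show Real.pi / (1/2) = 2 * Real.pi by ring]

lemma setInt_phi_pos {s : Set ℝ} (hs : MeasurableSet s) (hpos : 0 < volume s) :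
    0 < ∫ x in s, phi x := by
  clear hs
  rw [setIntegral_pos_iff_support_of_nonneg_ae
    (Filter.Eventually.of_forall fun x => phi_nonneg x) (integrable_phi.integrableOn)]
  have : Function.support phi = univ := by
    ext x; simp [Function.mem_support, (phi_pos x).ne']
  rw [this, univ_inter]
  exact hpos

lemma int_Ico_phi_pos {a b : ℝ} (h : a < b) : 0 < ∫ x in Ico a b, phi x :=
  setInt_phi_pos measurableSet_Ico (by rw [Real.volume_Ico]; simp [h, sub_pos.2 h])

lemma Phi_pos (t : ℝ) : 0 < Phi t := by
  have h : 0 < ∫ x in Ico (t-1) t, phi x := int_Ico_phi_pos (by linarith)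
  refine lt_of_lt_of_le h ?_
  apply setIntegral_mono_set integrable_phi.integrableOn
    (Filter.Eventually.of_forall fun x => phi_nonneg x)
  refine Filter.Eventually.of_forall (fun x hx => ?_)
  exact le_of_lt hx.2

lemma Phic_eq_Ici (t : ℝ) : Phic t = ∫ x in Ici t, phi x := by
  have hsplit : (∫ x in Iic t, phi x) + ∫ x in Ioi t, phi x = ∫ x, phi x := by
    rw [← setIntegral_union (Iic_disjoint_Ioi le_rfl) measurableSet_Ioi
      integrable_phi.integrableOn integrable_phi.integrableOn, Iic_union_Ioi,
      setIntegral_univ]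
  have hIoi : ∫ x in Ioi t, phi x = ∫ x in Ici t, phi x := by
    rw [integral_Ici_eq_integral_Ioi]
  rw [Phic, Phi, ← integral_phi]
  linarith [hsplit]

lemma Phic_sub {a b : ℝ} (h : a ≤ b) : Phic a - Phic b = ∫ x in Ico a b, phi x := by
  rw [Phic_eq_Ici, Phic_eq_Ici]
  have hu : Ico a b ∪ Ici b = Ici a := Ico_union_Ici_eq_Ici h
  have hd : Disjoint (Ico a b) (Ici b) :=
    (Iio_disjoint_Ici le_rfl).mono_left Ico_subset_Iio_self
  have hsplit : (∫ x in Ico a b, phi x) + ∫ x in Ici b, phi x = ∫ x in Ici a, phi x := by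
    rw [← setIntegral_union hd measurableSet_Ici
      integrable_phi.integrableOn integrable_phi.integrableOn, hu]
  linarith

lemma Phic_strictAnti : StrictAnti Phic := by
  intro a b hab
  have := int_Ico_phi_pos hab
  rw [← Phic_sub hab.le] at this
  linarith

lemma Phic_lt_of_lt {a b : ℝ} (h : Phic a < Phic b) : b < a := by
  by_contra hc
  push_neg at hc
  rcases eq_or_lt_of_le hc with rfl | hlt
  · exact lt_irrefl _ h
  · exact absurd (Phic_strictAnti hlt) (not_lt.2 h.le)

lemma Phic_inj {a b : ℝ} (h : Phic a = Phic b) : a = b :=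
  Phic_strictAnti.injective h

section Rotation

variable (p q : ℝ)

noncomputable def Tlin (p q : ℝ) : (ℝ × ℝ) →ₗ[ℝ] (ℝ × ℝ) :=
  Matrix.toLin (Module.Basis.finTwoProd ℝ) (Module.Basis.finTwoProd ℝ) !![p, -q; q, p]

lemma Tlin_apply (z : ℝ × ℝ) : Tlin p q z = (p * z.1 + -q * z.2, q * z.1 + p * z.2) := by
  rw [Tlin, Matrix.toLin_finTwoProd_apply]

lemma Tlin_det : LinearMap.det (Tlin p q) = p ^ 2 + q ^ 2 := by
  rw [Tlin, LinearMap.det_toLin, Matrix.det_fin_two_of]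
  ring

lemma Tlin_measurePreserving (hpq : p ^ 2 + q ^ 2 = 1) :
    MeasurePreserving (⇑(Tlin p q)) (volume : Measure (ℝ × ℝ)) volume := by
  have hdet : LinearMap.det (Tlin p q) ≠ 0 := by rw [Tlin_det, hpq]; norm_num
  refine ⟨(Tlin p q).continuous_of_finiteDimensional.measurable, ?_⟩
  rw [Measure.map_linearMap_addHaar_eq_smul_addHaar volume hdet, Tlin_det, hpq]
  simp

noncomputable def Thom (p q : ℝ) (hpq : p ^ 2 + q ^ 2 = 1) : (ℝ × ℝ) ≃ₜ (ℝ × ℝ) where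
  toFun z := (p * z.1 + -q * z.2, q * z.1 + p * z.2)
  invFun z := (p * z.1 + q * z.2, -q * z.1 + p * z.2)
  left_inv z := by
    ext
    · simp only; linear_combination z.1 * hpq
    · simp only; linear_combination z.2 * hpq
  right_inv z := by
    ext
    · simp only; linear_combination z.1 * hpq
    · simp only; linear_combination z.2 * hpq
  continuous_toFun := by fun_prop
  continuous_invFun := by fun_prop

lemma Thom_eq_Tlin (hpq : p ^ 2 + q ^ 2 = 1) : ⇑(Thom p q hpq) = ⇑(Tlin p q) := by
  ext z <;> simp [Thom, Tlin_apply]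

lemma Tlin_embedding (hpq : p ^ 2 + q ^ 2 = 1) : MeasurableEmbedding (⇑(Tlin p q)) := by
  rw [← Thom_eq_Tlin p q hpq]
  exact (Thom p q hpq).measurableEmbedding

lemma rot_integral (hpq : p ^ 2 + q ^ 2 = 1) (f : ℝ × ℝ → ℝ) :
    ∫ z : ℝ × ℝ, f (Tlin p q z) = ∫ z : ℝ × ℝ, f z :=
  (Tlin_measurePreserving p q hpq).integral_comp (Tlin_embedding p q hpq) f

lemma rot_integrable (hpq : p ^ 2 + q ^ 2 = 1) {f : ℝ × ℝ → ℝ} (hf : Integrable f) :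
    Integrable (fun z => f (Tlin p q z)) := by
  have := ((Tlin_measurePreserving p q hpq).integrable_comp_emb (Tlin_embedding p q hpq)
    (g := f)).2 hf
  exact this

lemma phi_mul_phi (x y : ℝ) : phi x * phi y = Real.exp (-(x^2 + y^2)/2) / (2 * Real.pi) := by
  unfold phi
  rw [div_mul_div_comm, ← Real.exp_add, Real.mul_self_sqrt (by positivity)]
  ring_nf

lemma phi_rot (hpq : p ^ 2 + q ^ 2 = 1) (z : ℝ × ℝ) :
    phi (Tlin p q z).1 * phi (Tlin p q z).2 = phi z.1 * phi z.2 := by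
  rw [Tlin_apply, phi_mul_phi, phi_mul_phi]
  congr 2
  linear_combination (-(z.1 ^ 2 + z.2 ^ 2) / 2) * hpq

end Rotation

/-- Fraction of a group (with noise level `σ`) passing both stages: first-stage
standardized threshold `t`, second-stage threshold `θ` on the latent quality. -/
noncomputable def Msel (μ σW σ t θ : ℝ) : ℝ :=
  ∫ z : ℝ × ℝ,
    (if Real.sqrt (σW ^ 2 + σ ^ 2) * t ≤ σW * z.1 + σ * z.2 then (1 : ℝ) else 0)
      * (if θ ≤ μ + σW * z.1 then (1 : ℝ) else 0) * phi z.1 * phi z.2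

/-- Latent-quality mass of a group (with noise level `σ`) passing both stages. -/
noncomputable def Rsel (μ σW σ t θ : ℝ) : ℝ :=
  ∫ z : ℝ × ℝ, (μ + σW * z.1)
    * (if Real.sqrt (σW ^ 2 + σ ^ 2) * t ≤ σW * z.1 + σ * z.2 then (1 : ℝ) else 0)
    * (if θ ≤ μ + σW * z.1 then (1 : ℝ) else 0) * phi z.1 * phi z.2

noncomputable def Hsel (μ σW σ t θ : ℝ) : ℝ :=
  ∫ z : ℝ × ℝ, max (μ + σW * z.1 - θ) 0
    * (if Real.sqrt (σW ^ 2 + σ ^ 2) * t ≤ σW * z.1 + σ * z.2 then (1 : ℝ) else 0)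
    * phi z.1 * phi z.2

section Integrability

lemma integrable_phiphi : Integrable (fun z : ℝ × ℝ => phi z.1 * phi z.2) := by
  rw [Measure.volume_eq_prod]
  exact integrable_phi.mul_prod integrable_phi

lemma integrable_abs_phi : Integrable (fun x : ℝ => |x| * phi x) := by
  have h := (integrable_mul_exp_neg_mul_sq (b := 1/2) (by norm_num)).abs.div_const
    (Real.sqrt (2 * Real.pi))
  apply h.congr
  filter_upwards with x
  rw [abs_mul, abs_of_nonneg (Real.exp_pos _).le]
  unfold phi
  rw [mul_div_assoc]
  have : -(1/2) * x ^ 2 = -x ^ 2 / 2 := by ring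
  rw [this]

lemma integrable_abs_phiphi : Integrable (fun z : ℝ × ℝ => |z.1| * phi z.1 * phi z.2) := by
  rw [Measure.volume_eq_prod]
  exact integrable_abs_phi.mul_prod integrable_phi

lemma integrable_affine_phiphi (a b : ℝ) :
    Integrable (fun z : ℝ × ℝ => (a + b * |z.1|) * phi z.1 * phi z.2) := by
  have h := (integrable_phiphi.const_mul a).add (integrable_abs_phiphi.const_mul b)
  apply h.congr
  filter_upwards with z
  simp only [Pi.add_apply]
  ring

lemma measurable_ind1 (σW σ t : ℝ) :
    Measurable (fun z : ℝ × ℝ =>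
      (if Real.sqrt (σW ^ 2 + σ ^ 2) * t ≤ σW * z.1 + σ * z.2 then (1 : ℝ) else 0)) := by
  apply Measurable.ite _ measurable_const measurable_const
  exact measurableSet_le measurable_const (by fun_prop)

lemma measurable_ind2 (μ σW θ : ℝ) :
    Measurable (fun z : ℝ × ℝ => (if θ ≤ μ + σW * z.1 then (1 : ℝ) else 0)) := by
  apply Measurable.ite _ measurable_const measurable_const
  exact measurableSet_le measurable_const (by fun_prop)

lemma ind_nonneg {P : Prop} [Decidable P] : (0:ℝ) ≤ if P then (1:ℝ) else 0 := by
  split <;> norm_num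

lemma ind_le_one {P : Prop} [Decidable P] : (if P then (1:ℝ) else 0) ≤ 1 := by
  split <;> norm_num

lemma integrable_Msel (μ σW σ t θ : ℝ) :
    Integrable (fun z : ℝ × ℝ =>
      (if Real.sqrt (σW ^ 2 + σ ^ 2) * t ≤ σW * z.1 + σ * z.2 then (1 : ℝ) else 0)
        * (if θ ≤ μ + σW * z.1 then (1 : ℝ) else 0) * phi z.1 * phi z.2) := by
  apply integrable_phiphi.mono'
  · exact ((((measurable_ind1 σW σ t).mul (measurable_ind2 μ σW θ)).mul
      (measurable_phi.comp measurable_fst)).mul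
      (measurable_phi.comp measurable_snd)).aestronglyMeasurable
  · filter_upwards with z
    rw [Real.norm_eq_abs, abs_mul, abs_mul, abs_mul,
      abs_of_nonneg (phi_nonneg _), abs_of_nonneg (phi_nonneg _),
      abs_of_nonneg (ind_nonneg), abs_of_nonneg (ind_nonneg)]
    have h1 : (if Real.sqrt (σW ^ 2 + σ ^ 2) * t ≤ σW * z.1 + σ * z.2 then (1:ℝ) else 0) ≤ 1 :=
      ind_le_one
    have h2 : (if θ ≤ μ + σW * z.1 then (1:ℝ) else 0) ≤ 1 := ind_le_one
    have hcore : (if Real.sqrt (σW ^ 2 + σ ^ 2) * t ≤ σW * z.1 + σ * z.2 then (1:ℝ) else 0)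
        * (if θ ≤ μ + σW * z.1 then (1:ℝ) else 0) ≤ 1 :=
      mul_le_one₀ h1 ind_nonneg h2
    calc (if Real.sqrt (σW ^ 2 + σ ^ 2) * t ≤ σW * z.1 + σ * z.2 then (1:ℝ) else 0)
          * (if θ ≤ μ + σW * z.1 then (1:ℝ) else 0) * phi z.1 * phi z.2
        ≤ 1 * phi z.1 * phi z.2 := by
          apply mul_le_mul_of_nonneg_right _ (phi_nonneg z.2)
          exact mul_le_mul_of_nonneg_right hcore (phi_nonneg z.1)
      _ = phi z.1 * phi z.2 := by ring

lemma integrable_Hsel (μ σW σ t θ : ℝ) (hσW : 0 ≤ σW) :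
    Integrable (fun z : ℝ × ℝ => max (μ + σW * z.1 - θ) 0
      * (if Real.sqrt (σW ^ 2 + σ ^ 2) * t ≤ σW * z.1 + σ * z.2 then (1 : ℝ) else 0)
      * phi z.1 * phi z.2) := by
  apply (integrable_affine_phiphi (|μ - θ|) σW).mono'
  · exact ((((by fun_prop : Measurable (fun z : ℝ × ℝ => max (μ + σW * z.1 - θ) 0)).mul
      (measurable_ind1 σW σ t)).mul
      (measurable_phi.comp measurable_fst)).mul
      (measurable_phi.comp measurable_snd)).aestronglyMeasurable
  · filter_upwards with z
    rw [Real.norm_eq_abs, abs_mul, abs_mul, abs_mul,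
      abs_of_nonneg (phi_nonneg _), abs_of_nonneg (phi_nonneg _),
      abs_of_nonneg (le_max_right _ _), abs_of_nonneg (ind_nonneg)]
    have h1 : (if Real.sqrt (σW ^ 2 + σ ^ 2) * t ≤ σW * z.1 + σ * z.2 then (1:ℝ) else 0) ≤ 1 :=
      ind_le_one
    have hmax : max (μ + σW * z.1 - θ) 0 ≤ |μ - θ| + σW * |z.1| := by
      apply max_le _ (by positivity)
      have := abs_nonneg z.1
      have := neg_abs_le (μ - θ)
      have h3 : σW * z.1 ≤ σW * |z.1| := mul_le_mul_of_nonneg_left (le_abs_self _) hσW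
      have := le_abs_self (μ - θ)
      linarith
    have hcore : max (μ + σW * z.1 - θ) 0
        * (if Real.sqrt (σW ^ 2 + σ ^ 2) * t ≤ σW * z.1 + σ * z.2 then (1:ℝ) else 0)
        ≤ |μ - θ| + σW * |z.1| :=
      le_trans (mul_le_of_le_one_right (le_max_right _ _) ind_le_one) hmax
    apply mul_le_mul_of_nonneg_right _ (phi_nonneg z.2)
    exact mul_le_mul_of_nonneg_right hcore (phi_nonneg z.1)

lemma integrable_Rsel (μ σW σ t θ : ℝ) (hσW : 0 ≤ σW) :
    Integrable (fun z : ℝ × ℝ => (μ + σW * z.1)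
      * (if Real.sqrt (σW ^ 2 + σ ^ 2) * t ≤ σW * z.1 + σ * z.2 then (1 : ℝ) else 0)
      * (if θ ≤ μ + σW * z.1 then (1 : ℝ) else 0) * phi z.1 * phi z.2) := by
  apply (integrable_affine_phiphi (|μ|) σW).mono'
  · exact (((((by fun_prop : Measurable (fun z : ℝ × ℝ => μ + σW * z.1)).mul
      (measurable_ind1 σW σ t)).mul (measurable_ind2 μ σW θ)).mul
      (measurable_phi.comp measurable_fst)).mul
      (measurable_phi.comp measurable_snd)).aestronglyMeasurable
  · filter_upwards with z
    rw [Real.norm_eq_abs, abs_mul, abs_mul, abs_mul, abs_mul,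
      abs_of_nonneg (phi_nonneg _), abs_of_nonneg (phi_nonneg _),
      abs_of_nonneg (ind_nonneg), abs_of_nonneg (ind_nonneg)]
    have h1 : (if Real.sqrt (σW ^ 2 + σ ^ 2) * t ≤ σW * z.1 + σ * z.2 then (1:ℝ) else 0) ≤ 1 :=
      ind_le_one
    have h2 : (if θ ≤ μ + σW * z.1 then (1:ℝ) else 0) ≤ 1 := ind_le_one
    have habs : |μ + σW * z.1| ≤ |μ| + σW * |z.1| := by
      calc |μ + σW * z.1| ≤ |μ| + |σW * z.1| := abs_add_le _ _
      _ = |μ| + σW * |z.1| := by rw [abs_mul, abs_of_nonneg hσW]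
    have hcore : |μ + σW * z.1|
        * (if Real.sqrt (σW ^ 2 + σ ^ 2) * t ≤ σW * z.1 + σ * z.2 then (1:ℝ) else 0)
        * (if θ ≤ μ + σW * z.1 then (1:ℝ) else 0) ≤ |μ| + σW * |z.1| := by
      refine le_trans (mul_le_of_le_one_right ?_ ind_le_one) ?_
      · positivity
      · exact le_trans (mul_le_of_le_one_right (abs_nonneg _) ind_le_one) habs
    apply mul_le_mul_of_nonneg_right _ (phi_nonneg z.2)
    exact mul_le_mul_of_nonneg_right hcore (phi_nonneg z.1)

end Integrability

section Gfun

/-- inner conditional-expectation-type function after rotation -/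
noncomputable def g1 (c A B u : ℝ) : ℝ := ∫ v : ℝ, max (c + A * u - B * v) 0 * phi v

lemma integrable_g1_integrand (d B : ℝ) :
    Integrable (fun v : ℝ => max (d - B * v) 0 * phi v) := by
  apply ((integrable_phi.const_mul (|d|)).add (integrable_abs_phi.const_mul (|B|))).mono'
  · have : Measurable fun v : ℝ => max (d - B * v) 0 * phi v :=
      ((measurable_const.sub (measurable_id'.const_mul B)).max measurable_const).mul
        measurable_phi
    exact this.aestronglyMeasurable
  · filter_upwards with v
    rw [Real.norm_eq_abs, abs_mul, abs_of_nonneg (phi_nonneg _),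
      abs_of_nonneg (le_max_right _ _)]
    have hmax : max (d - B * v) 0 ≤ |d| + |B| * |v| := by
      apply max_le _ (by positivity)
      have h1 := le_abs_self d
      have h2 : -(B * v) ≤ |B| * |v| := by
        rw [← abs_mul]; exact neg_le_abs _
      linarith
    have := mul_le_mul_of_nonneg_right hmax (phi_nonneg v)
    calc max (d - B * v) 0 * phi v ≤ (|d| + |B| * |v|) * phi v := this
      _ = |d| * phi v + |B| * (|v| * phi v) := by ring

lemma g1_nonneg (c A B u : ℝ) : 0 ≤ g1 c A B u := by
  apply integral_nonneg
  intro v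
  exact mul_nonneg (le_max_right _ _) (phi_nonneg _)

lemma g1_mono (c B : ℝ) {A : ℝ} (hA : 0 ≤ A) : Monotone (g1 c A B) := by
  intro u1 u2 h
  apply integral_mono (integrable_g1_integrand (c + A * u1) B)
    (integrable_g1_integrand (c + A * u2) B)
  intro v
  apply mul_le_mul_of_nonneg_right _ (phi_nonneg v)
  apply max_le_max _ le_rfl
  have := mul_le_mul_of_nonneg_left h hA
  linarith

lemma g1_strictMono (c : ℝ) {A B : ℝ} (hA : 0 < A) (hB : 0 < B) :
    StrictMono (g1 c A B) := by
  intro u1 u2 h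
  have key : g1 c A B u1 + A * (u2 - u1) * Phi ((c + A * u1) / B) ≤ g1 c A B u2 := by
    have hsub : ∫ v in Iic ((c + A * u1) / B),
        (max (c + A * u2 - B * v) 0 - max (c + A * u1 - B * v) 0) * phi v
        = ∫ v in Iic ((c + A * u1) / B), A * (u2 - u1) * phi v := by
      apply setIntegral_congr_fun measurableSet_Iic
      intro v hv
      dsimp only
      have hv' : B * v ≤ c + A * u1 := by
        rw [mem_Iic] at hv
        calc B * v ≤ B * ((c + A * u1) / B) := mul_le_mul_of_nonneg_left hv hB.le
          _ = c + A * u1 := by field_simp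
      have h1 : max (c + A * u1 - B * v) 0 = c + A * u1 - B * v :=
        max_eq_left (by linarith)
      have h2 : max (c + A * u2 - B * v) 0 = c + A * u2 - B * v := by
        apply max_eq_left
        nlinarith
      rw [h1, h2]
      ring
    have hint : Integrable (fun v =>
        max (c + A * u2 - B * v) 0 * phi v - max (c + A * u1 - B * v) 0 * phi v) :=
      (integrable_g1_integrand (c + A * u2) B).sub (integrable_g1_integrand (c + A * u1) B)
    have hset : ∫ v in Iic ((c + A * u1) / B),
        (max (c + A * u2 - B * v) 0 * phi v - max (c + A * u1 - B * v) 0 * phi v)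
        ≤ ∫ v, (max (c + A * u2 - B * v) 0 * phi v - max (c + A * u1 - B * v) 0 * phi v) := by
      apply setIntegral_le_integral hint
      filter_upwards with v
      rw [Pi.zero_apply]
      have : max (c + A * u1 - B * v) 0 ≤ max (c + A * u2 - B * v) 0 := by
        apply max_le_max _ le_rfl
        nlinarith
      have := mul_le_mul_of_nonneg_right this (phi_nonneg v)
      linarith
    have heq1 : ∫ v in Iic ((c + A * u1) / B),
        (max (c + A * u2 - B * v) 0 * phi v - max (c + A * u1 - B * v) 0 * phi v)
        = A * (u2 - u1) * Phi ((c + A * u1) / B) := by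
      have : ∀ v : ℝ, max (c + A * u2 - B * v) 0 * phi v - max (c + A * u1 - B * v) 0 * phi v
          = (max (c + A * u2 - B * v) 0 - max (c + A * u1 - B * v) 0) * phi v := by
        intro v; ring
      simp_rw [this, hsub]
      rw [integral_const_mul, Phi]
    have heq2 : ∫ v, (max (c + A * u2 - B * v) 0 * phi v - max (c + A * u1 - B * v) 0 * phi v)
        = g1 c A B u2 - g1 c A B u1 := by
      rw [integral_sub (integrable_g1_integrand (c + A * u2) B)
        (integrable_g1_integrand (c + A * u1) B)]
      rfl
    rw [heq1, heq2] at hset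
    linarith
  have hpos : 0 < A * (u2 - u1) * Phi ((c + A * u1) / B) := by
    apply mul_pos (by nlinarith) (Phi_pos _)
  linarith

lemma measurable_g1 (c B : ℝ) {A : ℝ} (hA : 0 ≤ A) : Measurable (g1 c A B) :=
  (g1_mono c B hA).measurable

lemma g1_le (c A B u : ℝ) : g1 c A B u ≤ |c| + |A| * |u| + |B| * ∫ v, |v| * phi v := by
  have h : ∫ v, (|c| + |A| * |u| + |B| * |v|) * phi v
      = |c| + |A| * |u| + |B| * ∫ v, |v| * phi v := by
    have : ∀ v : ℝ, (|c| + |A| * |u| + |B| * |v|) * phi v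
        = (|c| + |A| * |u|) * phi v + |B| * (|v| * phi v) := by intro v; ring
    simp_rw [this]
    rw [integral_add ((integrable_phi.const_mul _)) ((integrable_abs_phi.const_mul _)),
      integral_const_mul, integral_const_mul, integral_phi]
    ring
  rw [← h]
  apply integral_mono (integrable_g1_integrand (c + A * u) B)
  · apply ((integrable_phi.const_mul (|c| + |A| * |u|)).add
      (integrable_abs_phi.const_mul (|B|))).congr
    filter_upwards with v
    simp only [Pi.add_apply]
    ring
  intro v
  apply mul_le_mul_of_nonneg_right _ (phi_nonneg v)
  apply max_le _ (by positivity)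
  have h1 := le_abs_self c
  have h2 : A * u ≤ |A| * |u| := by rw [← abs_mul]; exact le_abs_self _
  have h3 : -(B * v) ≤ |B| * |v| := by rw [← abs_mul]; exact neg_le_abs _
  linarith

lemma integrable_g1_phi (c B : ℝ) {A : ℝ} (hA : 0 ≤ A) :
    Integrable (fun u => g1 c A B u * phi u) := by
  set D := |B| * ∫ v, |v| * phi v with hD
  apply ((integrable_phi.const_mul (|c| + D)).add (integrable_abs_phi.const_mul (|A|))).mono'
  · exact ((measurable_g1 c B hA).mul measurable_phi).aestronglyMeasurable
  · filter_upwards with u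
    rw [Real.norm_eq_abs, abs_mul, abs_of_nonneg (phi_nonneg _),
      abs_of_nonneg (g1_nonneg c A B u)]
    have h := g1_le c A B u
    have := mul_le_mul_of_nonneg_right h (phi_nonneg u)
    calc g1 c A B u * phi u ≤ (|c| + |A| * |u| + D) * phi u := by rw [hD]; linarith
      _ = (|c| + D) * phi u + |A| * (|u| * phi u) := by ring

end Gfun

section Bridge

lemma Rsel_decomp (μ σW σ t θ : ℝ) (hσW : 0 ≤ σW) :
    Rsel μ σW σ t θ = θ * Msel μ σW σ t θ + Hsel μ σW σ t θ := by
  unfold Rsel Msel Hsel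
  rw [← integral_const_mul, ← integral_add
    ((integrable_Msel μ σW σ t θ).const_mul θ) (integrable_Hsel μ σW σ t θ hσW)]
  apply integral_congr_ae
  filter_upwards with z
  by_cases h2 : θ ≤ μ + σW * z.1
  · have hmax : max (μ + σW * z.1 - θ) 0 = μ + σW * z.1 - θ := max_eq_left (by linarith)
    simp only [if_pos h2, hmax]
    ring
  · have hmax : max (μ + σW * z.1 - θ) 0 = 0 := max_eq_right (by push_neg at h2; linarith)
    simp only [if_neg h2, hmax]
    ring

lemma Hsel_theta_ineq (μ σW σ t θ θ' : ℝ) (hσW : 0 ≤ σW) :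
    Hsel μ σW σ t θ + (θ - θ') * Msel μ σW σ t θ ≤ Hsel μ σW σ t θ' := by
  unfold Hsel Msel
  rw [← integral_const_mul, ← integral_add
    (integrable_Hsel μ σW σ t θ hσW) ((integrable_Msel μ σW σ t θ).const_mul (θ - θ'))]
  apply integral_mono
    ((integrable_Hsel μ σW σ t θ hσW).add ((integrable_Msel μ σW σ t θ).const_mul (θ - θ')))
    (integrable_Hsel μ σW σ t θ' hσW)
  intro z
  simp only [Pi.add_apply]
  set i1 := (if Real.sqrt (σW ^ 2 + σ ^ 2) * t ≤ σW * z.1 + σ * z.2 then (1:ℝ) else 0) with hi1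
  have hi1n : 0 ≤ i1 := ind_nonneg
  have hφ : 0 ≤ phi z.1 * phi z.2 := mul_nonneg (phi_nonneg _) (phi_nonneg _)
  by_cases h2 : θ ≤ μ + σW * z.1
  · have hmax : max (μ + σW * z.1 - θ) 0 = μ + σW * z.1 - θ := max_eq_left (by linarith)
    have hmax' : μ + σW * z.1 - θ' ≤ max (μ + σW * z.1 - θ') 0 := le_max_left _ _
    simp only [if_pos h2, hmax]
    have : (μ + σW * z.1 - θ) * i1 * phi z.1 * phi z.2
        + (θ - θ') * (i1 * 1 * phi z.1 * phi z.2)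
        = ((μ + σW * z.1 - θ') * i1) * (phi z.1 * phi z.2) := by ring
    rw [this]
    have hle : (μ + σW * z.1 - θ') * i1 ≤ max (μ + σW * z.1 - θ') 0 * i1 :=
      mul_le_mul_of_nonneg_right hmax' hi1n
    calc ((μ + σW * z.1 - θ') * i1) * (phi z.1 * phi z.2)
        ≤ (max (μ + σW * z.1 - θ') 0 * i1) * (phi z.1 * phi z.2) :=
          mul_le_mul_of_nonneg_right hle hφ
      _ = max (μ + σW * z.1 - θ') 0 * i1 * phi z.1 * phi z.2 := by ring
  · have hmax : max (μ + σW * z.1 - θ) 0 = 0 := max_eq_right (by push_neg at h2; linarith)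
    simp only [if_neg h2, hmax]
    have h0 : (0:ℝ) ≤ max (μ + σW * z.1 - θ') 0 * i1 * phi z.1 * phi z.2 :=
      mul_nonneg (mul_nonneg (mul_nonneg (le_max_right _ 0) hi1n) (phi_nonneg z.1))
        (phi_nonneg z.2)
    calc 0 * i1 * phi z.1 * phi z.2 + (θ - θ') * (i1 * 0 * phi z.1 * phi z.2) = 0 := by ring
      _ ≤ _ := h0

lemma Hsel_eq_K (μ σW σ t θ : ℝ) (hσW : 0 < σW) (hσ : 0 ≤ σ) :
    Hsel μ σW σ t θ = ∫ u in Ici t,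
      g1 (μ - θ) (σW * (σW / Real.sqrt (σW ^ 2 + σ ^ 2)))
        (σW * (σ / Real.sqrt (σW ^ 2 + σ ^ 2))) u * phi u := by
  set s := Real.sqrt (σW ^ 2 + σ ^ 2) with hs_def
  have hs2 : s ^ 2 = σW ^ 2 + σ ^ 2 := Real.sq_sqrt (by positivity)
  have hs : 0 < s := Real.sqrt_pos.2 (by positivity)
  set p := σW / s with hp_def
  set q := σ / s with hq_def
  have hpq : p ^ 2 + q ^ 2 = 1 := by
    rw [hp_def, hq_def, div_pow, div_pow, ← add_div, ← hs2]
    field_simp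
  set A := σW * p with hA_def
  set B := σW * q with hB_def
  set c := μ - θ with hc_def
  set f : ℝ × ℝ → ℝ := fun z => max (μ + σW * z.1 - θ) 0
    * (if s * t ≤ σW * z.1 + σ * z.2 then (1 : ℝ) else 0) * phi z.1 * phi z.2 with hf_def
  have hfint : Integrable f := integrable_Hsel μ σW σ t θ hσW.le
  have hcomp : ∀ w : ℝ × ℝ, f (Tlin p q w)
      = max (c + A * w.1 - B * w.2) 0 * (if t ≤ w.1 then (1:ℝ) else 0) * phi w.1 * phi w.2 := by
    intro w
    have hT := Tlin_apply p q w
    have h1 : (Tlin p q w).1 = p * w.1 + -q * w.2 := by rw [hT]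
    have h2 : (Tlin p q w).2 = q * w.1 + p * w.2 := by rw [hT]
    have hq1 : μ + σW * (Tlin p q w).1 - θ = c + A * w.1 - B * w.2 := by
      rw [h1, hc_def, hA_def, hB_def]; ring
    have hcond : σW * (Tlin p q w).1 + σ * (Tlin p q w).2 = s * w.1 := by
      rw [h1, h2, hp_def, hq_def]
      field_simp
      linear_combination (-w.1) * hs2
    have hind : (if s * t ≤ σW * (Tlin p q w).1 + σ * (Tlin p q w).2 then (1:ℝ) else 0)
        = (if t ≤ w.1 then (1:ℝ) else 0) := by
      rw [hcond]
      congr 1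
      simp only [eq_iff_iff]
      exact mul_le_mul_iff_right₀ hs
    have hphi := phi_rot p q hpq w
    rw [hf_def]
    simp only
    rw [hq1, hind,
      mul_assoc (max (c + A * w.1 - B * w.2) 0 * (if t ≤ w.1 then (1:ℝ) else 0))
        (phi ((Tlin p q) w).1) (phi ((Tlin p q) w).2), hphi, ← mul_assoc]
  set G : ℝ × ℝ → ℝ := fun w => max (c + A * w.1 - B * w.2) 0
    * (if t ≤ w.1 then (1:ℝ) else 0) * phi w.1 * phi w.2 with hG_def
  have hGint : Integrable G := by
    apply (rot_integrable p q hpq hfint).congr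
    filter_upwards with w
    rw [hcomp w]
  have step1 : Hsel μ σW σ t θ = ∫ w : ℝ × ℝ, G w := by
    rw [show Hsel μ σW σ t θ = ∫ z : ℝ × ℝ, f z from rfl, ← rot_integral p q hpq f]
    apply integral_congr_ae
    filter_upwards with w
    rw [hcomp w]
  rw [step1]
  rw [Measure.volume_eq_prod] at hGint ⊢
  rw [integral_prod G hGint]
  have inner_eq : ∀ u : ℝ, (∫ v : ℝ, G (u, v))
      = (if t ≤ u then (1:ℝ) else 0) * (g1 c A B u * phi u) := by
    intro u
    have hpt : ∀ v : ℝ, G (u, v)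
        = ((if t ≤ u then (1:ℝ) else 0) * phi u) * (max (c + A * u - B * v) 0 * phi v) := by
      intro v
      rw [hG_def]
      simp only
      ring
    simp_rw [hpt]
    rw [integral_const_mul]
    rw [show g1 c A B u = ∫ v : ℝ, max (c + A * u - B * v) 0 * phi v from rfl]
    ring
  simp_rw [inner_eq]
  rw [← integral_indicator measurableSet_Ici]
  apply integral_congr_ae
  filter_upwards with u
  by_cases h : t ≤ u <;> simp [Set.indicator_apply, mem_Ici, h]

end Bridge

section Concave

variable {g : ℝ → ℝ}

lemma K_slice (hint : Integrable (fun u => g u * phi u)) {t1 t2 : ℝ} (h : t2 ≤ t1) :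
    (∫ u in Ici t2, g u * phi u) - (∫ u in Ici t1, g u * phi u)
      = ∫ u in Ico t2 t1, g u * phi u := by
  have hu : Ico t2 t1 ∪ Ici t1 = Ici t2 := Ico_union_Ici_eq_Ici h
  have hd : Disjoint (Ico t2 t1) (Ici t1) :=
    (Iio_disjoint_Ici le_rfl).mono_left Ico_subset_Iio_self
  have hsplit : (∫ u in Ico t2 t1, g u * phi u) + ∫ u in Ici t1, g u * phi u
      = ∫ u in Ici t2, g u * phi u := by
    rw [← setIntegral_union hd measurableSet_Ici hint.integrableOn hint.integrableOn, hu]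
  linarith

lemma slice_lb (hg : Monotone g) (hint : Integrable (fun u => g u * phi u)) {t1 t2 : ℝ}
    (h : t2 ≤ t1) :
    g t2 * (Phic t2 - Phic t1) ≤ ∫ u in Ico t2 t1, g u * phi u := by
  rw [Phic_sub h, ← integral_const_mul]
  apply setIntegral_mono_on ((integrable_phi.const_mul (g t2)).integrableOn)
    hint.integrableOn measurableSet_Ico
  intro u hu
  exact mul_le_mul_of_nonneg_right (hg hu.1) (phi_nonneg u)

lemma slice_ub (hg : Monotone g) (hint : Integrable (fun u => g u * phi u)) {t1 t2 : ℝ}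
    (h : t2 ≤ t1) :
    ∫ u in Ico t2 t1, g u * phi u ≤ g t1 * (Phic t2 - Phic t1) := by
  rw [Phic_sub h, ← integral_const_mul]
  apply setIntegral_mono_on hint.integrableOn
    ((integrable_phi.const_mul (g t1)).integrableOn) measurableSet_Ico
  intro u hu
  exact mul_le_mul_of_nonneg_right (hg hu.2.le) (phi_nonneg u)

lemma slice_lb_strict (hg : StrictMono g) (hint : Integrable (fun u => g u * phi u))
    {t1 t2 : ℝ} (h : t2 < t1) :
    g t2 * (Phic t2 - Phic t1) < ∫ u in Ico t2 t1, g u * phi u := by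
  set m := (t2 + t1) / 2 with hm_def
  have hm1 : t2 < m := by rw [hm_def]; linarith
  have hm2 : m < t1 := by rw [hm_def]; linarith
  have hu : Ico t2 m ∪ Ico m t1 = Ico t2 t1 := Ico_union_Ico_eq_Ico hm1.le hm2.le
  have hd : Disjoint (Ico t2 m) (Ico m t1) :=
    (Iio_disjoint_Ici le_rfl).mono Ico_subset_Iio_self Ico_subset_Ici_self
  have hsplit : (∫ u in Ico t2 m, g u * phi u) + ∫ u in Ico m t1, g u * phi u
      = ∫ u in Ico t2 t1, g u * phi u := by
    rw [← setIntegral_union hd measurableSet_Ico hint.integrableOn hint.integrableOn, hu]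
  have h1 : g t2 * (Phic t2 - Phic m) ≤ ∫ u in Ico t2 m, g u * phi u :=
    slice_lb hg.monotone hint hm1.le
  have h2 : g m * (Phic m - Phic t1) ≤ ∫ u in Ico m t1, g u * phi u :=
    slice_lb hg.monotone hint hm2.le
  have hgm : g t2 < g m := hg hm1
  have hφ : 0 < Phic m - Phic t1 := sub_pos.2 (Phic_strictAnti hm2)
  nlinarith [mul_pos (sub_pos.2 hgm) hφ]

/-- Core concavity inequality, case `Phic t1 < Phic t2`. -/
lemma K_core (hg : Monotone g) (hint : Integrable (fun u => g u * phi u))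
    {t1 t2 tb lam : ℝ} (hlam : lam ∈ Ioo (0:ℝ) 1)
    (hy : Phic tb = lam * Phic t1 + (1 - lam) * Phic t2)
    (hord : Phic t1 < Phic t2) :
    lam * (∫ u in Ici t1, g u * phi u) + (1 - lam) * (∫ u in Ici t2, g u * phi u)
      ≤ ∫ u in Ici tb, g u * phi u := by
  obtain ⟨hl0, hl1⟩ := hlam
  have hb1 : Phic t1 < Phic tb := by nlinarith
  have hb2 : Phic tb < Phic t2 := by nlinarith
  have ht1 : tb < t1 := Phic_lt_of_lt hb1
  have ht2 : t2 < tb := Phic_lt_of_lt hb2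
  have e1 : (∫ u in Ici tb, g u * phi u) - (∫ u in Ici t1, g u * phi u)
      = ∫ u in Ico tb t1, g u * phi u := K_slice hint ht1.le
  have e2 : (∫ u in Ici t2, g u * phi u) - (∫ u in Ici tb, g u * phi u)
      = ∫ u in Ico t2 tb, g u * phi u := K_slice hint ht2.le
  have i1 : g tb * (Phic tb - Phic t1) ≤ ∫ u in Ico tb t1, g u * phi u :=
    slice_lb hg hint ht1.le
  have i2 : ∫ u in Ico t2 tb, g u * phi u ≤ g tb * (Phic t2 - Phic tb) :=
    slice_ub hg hint ht2.le
  have hid : lam * (g tb * (Phic tb - Phic t1)) = (1 - lam) * (g tb * (Phic t2 - Phic tb)) := by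
    linear_combination (g tb) * hy
  nlinarith [mul_le_mul_of_nonneg_left i1 hl0.le,
    mul_le_mul_of_nonneg_left i2 (by linarith : (0:ℝ) ≤ 1 - lam)]

lemma K_core_strict (hg : StrictMono g) (hint : Integrable (fun u => g u * phi u))
    {t1 t2 tb lam : ℝ} (hlam : lam ∈ Ioo (0:ℝ) 1)
    (hy : Phic tb = lam * Phic t1 + (1 - lam) * Phic t2)
    (hord : Phic t1 < Phic t2) :
    lam * (∫ u in Ici t1, g u * phi u) + (1 - lam) * (∫ u in Ici t2, g u * phi u)
      < ∫ u in Ici tb, g u * phi u := by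
  obtain ⟨hl0, hl1⟩ := hlam
  have hb1 : Phic t1 < Phic tb := by nlinarith
  have hb2 : Phic tb < Phic t2 := by nlinarith
  have ht1 : tb < t1 := Phic_lt_of_lt hb1
  have ht2 : t2 < tb := Phic_lt_of_lt hb2
  have e1 : (∫ u in Ici tb, g u * phi u) - (∫ u in Ici t1, g u * phi u)
      = ∫ u in Ico tb t1, g u * phi u := K_slice hint ht1.le
  have e2 : (∫ u in Ici t2, g u * phi u) - (∫ u in Ici tb, g u * phi u)
      = ∫ u in Ico t2 tb, g u * phi u := K_slice hint ht2.le
  have i1 : g tb * (Phic tb - Phic t1) < ∫ u in Ico tb t1, g u * phi u :=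
    slice_lb_strict hg hint ht1
  have i2 : ∫ u in Ico t2 tb, g u * phi u ≤ g tb * (Phic t2 - Phic tb) :=
    slice_ub hg.monotone hint ht2.le
  have hid : lam * (g tb * (Phic tb - Phic t1)) = (1 - lam) * (g tb * (Phic t2 - Phic tb)) := by
    linear_combination (g tb) * hy
  nlinarith [mul_lt_mul_of_pos_left i1 hl0,
    mul_le_mul_of_nonneg_left i2 (by linarith : (0:ℝ) ≤ 1 - lam)]

lemma K_concave (hg : Monotone g) (hint : Integrable (fun u => g u * phi u))
    {t1 t2 tb lam : ℝ} (hlam : lam ∈ Ioo (0:ℝ) 1)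
    (hy : Phic tb = lam * Phic t1 + (1 - lam) * Phic t2) :
    lam * (∫ u in Ici t1, g u * phi u) + (1 - lam) * (∫ u in Ici t2, g u * phi u)
      ≤ ∫ u in Ici tb, g u * phi u := by
  rcases lt_trichotomy (Phic t1) (Phic t2) with hord | hord | hord
  · exact K_core hg hint hlam hy hord
  · have ht : t1 = t2 := Phic_inj hord
    subst ht
    have htb : tb = t1 := Phic_inj (by rw [hy, ← hord]; ring)
    rw [htb]
    have := hlam.1
    nlinarith [le_refl (∫ u in Ici t1, g u * phi u)]
  · have hlam' : 1 - lam ∈ Ioo (0:ℝ) 1 := ⟨by linarith [hlam.2], by linarith [hlam.1]⟩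
    have hy' : Phic tb = (1 - lam) * Phic t2 + (1 - (1 - lam)) * Phic t1 := by
      rw [hy]; ring
    have := K_core hg hint hlam' hy' hord
    have hll : (1 - (1 - lam)) = lam := by ring
    rw [hll] at this
    linarith

lemma K_concave_strict (hg : StrictMono g) (hint : Integrable (fun u => g u * phi u))
    {t1 t2 tb lam : ℝ} (hlam : lam ∈ Ioo (0:ℝ) 1)
    (hy : Phic tb = lam * Phic t1 + (1 - lam) * Phic t2)
    (hne : Phic t1 ≠ Phic t2) :
    lam * (∫ u in Ici t1, g u * phi u) + (1 - lam) * (∫ u in Ici t2, g u * phi u)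
      < ∫ u in Ici tb, g u * phi u := by
  rcases lt_trichotomy (Phic t1) (Phic t2) with hord | hord | hord
  · exact K_core_strict hg hint hlam hy hord
  · exact absurd hord hne
  · have hlam' : 1 - lam ∈ Ioo (0:ℝ) 1 := ⟨by linarith [hlam.2], by linarith [hlam.1]⟩
    have hy' : Phic tb = (1 - lam) * Phic t2 + (1 - (1 - lam)) * Phic t1 := by
      rw [hy]; ring
    have := K_core_strict hg hint hlam' hy' hord
    have hll : (1 - (1 - lam)) = lam := by ring
    rw [hll] at this
    linarith

end Concave

/-- Feasible first-stage selection fractions `x` for group `A`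
(with `p_B = 1 - p_A`). -/
def feas (pA α₁ : ℝ) : Set ℝ :=
  {x : ℝ | x ∈ Set.Ioo (0 : ℝ) 1 ∧ (α₁ - pA * x) / (1 - pA) ∈ Set.Ioo (0 : ℝ) 1}

set_option maxHeartbeats 1000000 in
/-- Strict concavity of the two-stage utility
`F(x) = Q₂(t_A(x), t_B(x))` in the first-stage selection fraction `x` of group
`A`, where `t_A(x), t_B(x)` select fractions `x` and `(α₁ - p_A x)/p_B`, and
`θf(x)` is the second-stage threshold matching the budget `α₂`. -/
theorem two_stage_utility_strictly_concave
    (μ σW σA σB pA α₁ α₂ : ℝ) (tA tB θf : ℝ → ℝ)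
    (hσW : 0 < σW) (hσB : 0 ≤ σB) (hσAB : σB < σA)
    (hpA : pA ∈ Set.Ioo (0 : ℝ) 1) (hα₁ : α₁ ∈ Set.Ioo (0 : ℝ) 1)
    (hα₂ : 0 < α₂) (hα₂' : α₂ < α₁)
    (htA : ∀ x ∈ feas pA α₁, Phic (tA x) = x)
    (htB : ∀ x ∈ feas pA α₁, Phic (tB x) = (α₁ - pA * x) / (1 - pA))
    (hθf : ∀ x ∈ feas pA α₁,
      pA * Msel μ σW σA (tA x) (θf x) + (1 - pA) * Msel μ σW σB (tB x) (θf x) = α₂) :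
    ∀ x₁ ∈ feas pA α₁, ∀ x₂ ∈ feas pA α₁, x₁ ≠ x₂ →
    ∀ lam ∈ Set.Ioo (0 : ℝ) 1,
      lam * ((pA * Rsel μ σW σA (tA x₁) (θf x₁)
              + (1 - pA) * Rsel μ σW σB (tB x₁) (θf x₁)) / α₂)
        + (1 - lam) * ((pA * Rsel μ σW σA (tA x₂) (θf x₂)
              + (1 - pA) * Rsel μ σW σB (tB x₂) (θf x₂)) / α₂)
      < (pA * Rsel μ σW σA (tA (lam * x₁ + (1 - lam) * x₂)) (θf (lam * x₁ + (1 - lam) * x₂))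
          + (1 - pA) * Rsel μ σW σB (tB (lam * x₁ + (1 - lam) * x₂)) (θf (lam * x₁ + (1 - lam) * x₂))) / α₂ := by
  intro x₁ hx₁ x₂ hx₂ hne lam hlam
  obtain ⟨hl0, hl1⟩ := hlam
  obtain ⟨hpA0, hpA1⟩ := hpA
  have hpB : (0:ℝ) < 1 - pA := by linarith
  have hσA : 0 < σA := lt_of_le_of_lt hσB hσAB
  set xb := lam * x₁ + (1 - lam) * x₂ with hxb_def
  -- feasibility of xb
  obtain ⟨⟨h1a, h1b⟩, ⟨h1c, h1d⟩⟩ := hx₁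
  obtain ⟨⟨h2a, h2b⟩, ⟨h2c, h2d⟩⟩ := hx₂
  have hyB_comb : (α₁ - pA * xb) / (1 - pA)
      = lam * ((α₁ - pA * x₁) / (1 - pA)) + (1 - lam) * ((α₁ - pA * x₂) / (1 - pA)) := by
    field_simp
    ring
  have hxb : xb ∈ feas pA α₁ := by
    refine ⟨⟨by nlinarith, by nlinarith⟩, ?_⟩
    rw [hyB_comb]
    constructor
    · nlinarith
    · nlinarith
  have hx₁' : x₁ ∈ feas pA α₁ := ⟨⟨h1a, h1b⟩, ⟨h1c, h1d⟩⟩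
  have hx₂' : x₂ ∈ feas pA α₁ := ⟨⟨h2a, h2b⟩, ⟨h2c, h2d⟩⟩
  -- Phic combination identities
  have hyA : Phic (tA xb) = lam * Phic (tA x₁) + (1 - lam) * Phic (tA x₂) := by
    rw [htA xb hxb, htA x₁ hx₁', htA x₂ hx₂']
  have hyB : Phic (tB xb) = lam * Phic (tB x₁) + (1 - lam) * Phic (tB x₂) := by
    rw [htB xb hxb, htB x₁ hx₁', htB x₂ hx₂', hyB_comb]
  have hneA : Phic (tA x₁) ≠ Phic (tA x₂) := by
    rw [htA x₁ hx₁', htA x₂ hx₂']; exact hne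
  set θb := θf xb with hθb_def
  -- group A data
  set sA := Real.sqrt (σW ^ 2 + σA ^ 2) with hsA_def
  have hsA : 0 < sA := Real.sqrt_pos.2 (by positivity)
  set AA := σW * (σW / sA) with hAA_def
  set BA := σW * (σA / sA) with hBA_def
  have hAA : 0 < AA := by apply mul_pos hσW (div_pos hσW hsA)
  have hBA : 0 < BA := by apply mul_pos hσW (div_pos hσA hsA)
  -- group B data
  set sB := Real.sqrt (σW ^ 2 + σB ^ 2) with hsB_def
  have hsB : 0 < sB := Real.sqrt_pos.2 (by positivity)
  set AB := σW * (σW / sB) with hAB_def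
  set BB := σW * (σB / sB) with hBB_def
  have hAB : 0 ≤ AB := by positivity
  -- concavity of the two H-pieces at θb
  have hconcA : lam * Hsel μ σW σA (tA x₁) θb + (1 - lam) * Hsel μ σW σA (tA x₂) θb
      < Hsel μ σW σA (tA xb) θb := by
    rw [Hsel_eq_K μ σW σA (tA x₁) θb hσW hσA.le, Hsel_eq_K μ σW σA (tA x₂) θb hσW hσA.le,
      Hsel_eq_K μ σW σA (tA xb) θb hσW hσA.le]
    exact K_concave_strict (g1_strictMono (μ - θb) hAA hBA)
      (integrable_g1_phi (μ - θb) BA hAA.le) ⟨hl0, hl1⟩ hyA hneA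
  have hconcB : lam * Hsel μ σW σB (tB x₁) θb + (1 - lam) * Hsel μ σW σB (tB x₂) θb
      ≤ Hsel μ σW σB (tB xb) θb := by
    rw [Hsel_eq_K μ σW σB (tB x₁) θb hσW hσB, Hsel_eq_K μ σW σB (tB x₂) θb hσW hσB,
      Hsel_eq_K μ σW σB (tB xb) θb hσW hσB]
    exact K_concave (g1_mono (μ - θb) BB hAB)
      (integrable_g1_phi (μ - θb) BB hAB) ⟨hl0, hl1⟩ hyB
  -- value decomposition
  have hval : ∀ x ∈ feas pA α₁,
      pA * Rsel μ σW σA (tA x) (θf x) + (1 - pA) * Rsel μ σW σB (tB x) (θf x)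
      = θf x * α₂ + pA * Hsel μ σW σA (tA x) (θf x)
        + (1 - pA) * Hsel μ σW σB (tB x) (θf x) := by
    intro x hx
    rw [Rsel_decomp μ σW σA (tA x) (θf x) hσW.le, Rsel_decomp μ σW σB (tB x) (θf x) hσW.le]
    linear_combination (θf x) * (hθf x hx)
  -- suboptimality step: value at xᵢ with θᵢ is ≤ using θb
  have hstep : ∀ x ∈ feas pA α₁,
      θf x * α₂ + pA * Hsel μ σW σA (tA x) (θf x) + (1 - pA) * Hsel μ σW σB (tB x) (θf x)
      ≤ θb * α₂ + pA * Hsel μ σW σA (tA x) θb + (1 - pA) * Hsel μ σW σB (tB x) θb := by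
    intro x hx
    have hA := Hsel_theta_ineq μ σW σA (tA x) (θf x) θb hσW.le
    have hB := Hsel_theta_ineq μ σW σB (tB x) (θf x) θb hσW.le
    have hA' := mul_le_mul_of_nonneg_left hA hpA0.le
    have hB' := mul_le_mul_of_nonneg_left hB hpB.le
    rw [mul_add] at hA' hB'
    have combo : pA * ((θf x - θb) * Msel μ σW σA (tA x) (θf x))
        + (1 - pA) * ((θf x - θb) * Msel μ σW σB (tB x) (θf x)) = (θf x - θb) * α₂ := by
      linear_combination (θf x - θb) * (hθf x hx)
    linarith
  -- assemble
  have hVb : pA * Rsel μ σW σA (tA xb) θb + (1 - pA) * Rsel μ σW σB (tB xb) θb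
      = θb * α₂ + pA * Hsel μ σW σA (tA xb) θb + (1 - pA) * Hsel μ σW σB (tB xb) θb := by
    have := hval xb hxb
    rw [← hθb_def] at this
    exact this
  have hmain : lam * (pA * Rsel μ σW σA (tA x₁) (θf x₁)
        + (1 - pA) * Rsel μ σW σB (tB x₁) (θf x₁))
      + (1 - lam) * (pA * Rsel μ σW σA (tA x₂) (θf x₂)
        + (1 - pA) * Rsel μ σW σB (tB x₂) (θf x₂))
      < pA * Rsel μ σW σA (tA xb) θb + (1 - pA) * Rsel μ σW σB (tB xb) θb := by
    have hv1 := hval x₁ hx₁'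
    have hv2 := hval x₂ hx₂'
    have hs1 := hstep x₁ hx₁'
    have hs2 := hstep x₂ hx₂'
    have hcA := mul_lt_mul_of_pos_left hconcA hpA0
    have hcB := mul_le_mul_of_nonneg_left hconcB hpB.le
    rw [mul_add] at hcA hcB
    have e1 := mul_le_mul_of_nonneg_left (le_trans (le_of_eq hv1) hs1) hl0.le
    have e2 := mul_le_mul_of_nonneg_left (le_trans (le_of_eq hv2) hs2)
      (by linarith : (0:ℝ) ≤ 1 - lam)
    rw [hVb]
    ring_nf at e1 e2 hcA hcB ⊢
    linarith [e1, e2, hcA, hcB]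
  calc lam * ((pA * Rsel μ σW σA (tA x₁) (θf x₁)
        + (1 - pA) * Rsel μ σW σB (tB x₁) (θf x₁)) / α₂)
      + (1 - lam) * ((pA * Rsel μ σW σA (tA x₂) (θf x₂)
        + (1 - pA) * Rsel μ σW σB (tB x₂) (θf x₂)) / α₂)
      = (lam * (pA * Rsel μ σW σA (tA x₁) (θf x₁)
        + (1 - pA) * Rsel μ σW σB (tB x₁) (θf x₁))
      + (1 - lam) * (pA * Rsel μ σW σA (tA x₂) (θf x₂)
        + (1 - pA) * Rsel μ σW σB (tB x₂) (θf x₂))) / α₂ := by ring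
    _ < (pA * Rsel μ σW σA (tA xb) θb + (1 - pA) * Rsel μ σW σB (tB xb) θb) / α₂ :=
        div_lt_div_of_pos_right hmain hα₂
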